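/- arXiv:2601.22513 — 8 statements merged into one kernel-verified Lean document; each statement's English description precedes it below -/
import Mathlib

section
/- There exist a nonempty finite alphabet V, a horizon H ≥ 2, and a probability mass function π on the set V^H of length-H sequences with the following properties: (i) π has a unique mode y* ∈ V^H, i.e. π(y*) > π(y) for every y ≠ y*; (ii) π(y*) ≤ 1/2; (iii) the greedy sequence ŷ ∈ V^H, defined coordinatewise for h = 1,…,H by letting ŷ_h be a maximizer over v ∈ V of the prefix-marginal probability π({y ∈ V^H : y_i = ŷ_i for all i < h and y_h = v}), has a unique maximizer at every step h, and satisfies ŷ ≠ y*. -/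
/-- The probability that a sequence agrees with the prefix `yhat₁,…,yhat_{h-1}`
and has symbol `v` at position `h`. -/
noncomputable def prefixProb {V : Type*} {H : ℕ} (π : (Fin H → V) → ℝ)
    (yhat : Fin H → V) (h : Fin H) (v : V) : ℝ :=
  ∑' y : {y : Fin H → V // (∀ i : Fin H, i < h → y i = yhat i) ∧ y h = v}, π y.1

lemma sum_pi2 (f : (Fin 2 → Bool) → ℝ) :
    ∑ y : (Fin 2 → Bool), f y =
      f ![false, false] + f ![false, true] + f ![true, false] + f ![true, true] := by
  rw [← (piFinTwoEquiv fun _ => Bool).symm.sum_comp]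
  simp only [Fintype.sum_prod_type, piFinTwoEquiv, Fintype.sum_bool, Equiv.coe_fn_symm_mk]
  have h : (finZeroElim : Fin 0 → Bool) = ![] := Subsingleton.elim _ _
  rw [h]
  change f ![true, true] + f ![true, false] + (f ![false, true] + f ![false, false]) = _; ring

lemma tsum_subtype_pi2 (P : (Fin 2 → Bool) → Prop) [DecidablePred P]
    (π : (Fin 2 → Bool) → ℝ) :
    ∑' y : {y // P y}, π y.1 =
      (if P ![false, false] then π ![false, false] else 0) +
      (if P ![false, true] then π ![false, true] else 0) +
      (if P ![true, false] then π ![true, false] else 0) +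
      (if P ![true, true] then π ![true, true] else 0) := by
  rw [tsum_fintype]
  rw [← Finset.sum_subtype (Finset.univ.filter P) (by simp) π]
  rw [Finset.sum_filter, sum_pi2]

/-- There exist a nonempty finite alphabet `V`, a horizon `H ≥ 2`, and a probability mass
function `π` on `V^H` with a unique mode `y*` of probability at most `1/2`, such that the
greedy sequence `ŷ` (the unique stepwise maximizer of the prefix-marginal probabilities)
differs from `y*`. -/
theorem greedy_decoding_fails_for_unaligned_models :
    ∃ (V : Type) (_ : Finite V) (_ : Nonempty V) (H : ℕ), 2 ≤ H ∧
      ∃ (π : (Fin H → V) → ℝ) (ystar yhat : Fin H → V),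
        (∀ y, 0 ≤ π y) ∧ (∑' y, π y = 1) ∧
        (∀ y, y ≠ ystar → π y < π ystar) ∧
        π ystar ≤ 1 / 2 ∧
        (∀ (h : Fin H) (v : V), v ≠ yhat h →
          prefixProb π yhat h v < prefixProb π yhat h (yhat h)) ∧
        yhat ≠ ystar := by
  refine ⟨Bool, inferInstance, inferInstance, 2, le_refl 2, ?_⟩
  set π : (Fin 2 → Bool) → ℝ := fun y =>
    if y 0 then (if y 1 then 1/4 else 7/20) else (if y 1 then 0 else 2/5) with hπ
  refine ⟨π, ![false, false], ![true, false], ?_, ?_, ?_, ?_, ?_, ?_⟩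
  · intro y
    rcases h0 : y 0 <;> rcases h1 : y 1 <;> simp [hπ, h0, h1] <;> norm_num
  · rw [tsum_fintype, sum_pi2]
    simp [hπ]; norm_num
  · intro y hy
    have hne : ¬ (y 0 = false ∧ y 1 = false) := by
      rintro ⟨a, b⟩
      apply hy
      funext i
      fin_cases i <;> simp [a, b]
    rcases h0 : y 0 <;> rcases h1 : y 1 <;> simp [hπ, h0, h1] <;> norm_num
    exact hne ⟨h0, h1⟩
  · simp [hπ]; norm_num
  · intro h v hv
    unfold prefixProb
    fin_cases h <;> cases v <;>
      simp only [Matrix.cons_val_zero, Matrix.cons_val_one, Matrix.head_cons, ne_eq] at hv <;>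
      first
        | exact absurd rfl hv
        | (rw [tsum_subtype_pi2, tsum_subtype_pi2]
           norm_num [hπ, Fin.forall_fin_two, Fin.lt_def])
  · intro h
    have := congrFun h 0
    simp at this
end

section
/- For every policy π₁ and every δ ∈ (0,1), the measure of the failure set satisfies μ({x ∈ X : π₁(y₀*(x) | x) ≤ 1 − δ}) ≤ (J₀(π₁*) − J₀(π₁)) / (γ · δ). -/
open MeasureTheory

/-- The objective `J₀(π) = E_{x∼μ}[ Σ_y π(y|x) log π₀(y|x) ]`. -/
noncomputable def J0 {X Y : Type*} [MeasurableSpace X] [Fintype Y]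
    (μ : Measure X) (π₀ π : X → Y → ℝ) : ℝ :=
  ∫ x, ∑ y, π x y * Real.log (π₀ x y) ∂μ

/-- From performance gap to suboptimality probability: for every policy `π₁` and every
`δ ∈ (0,1)`, the measure of the failure set `{x : π₁(y₀*(x)|x) ≤ 1 − δ}` is at most
`(J₀(π₁*) − J₀(π₁)) / (γ δ)`, where `π₁*` is the deterministic policy at `y₀*`. -/
theorem failure_prob_le_performance_gap
    {X : Type*} [MeasurableSpace X] (μ : Measure X) [IsProbabilityMeasure μ]
    {Y : Type*} [Fintype Y] [Nonempty Y] [DecidableEq Y] [MeasurableSpace Y]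
    (π₀ π₁ : X → Y → ℝ) (y0star : X → Y) (γ : ℝ)
    (hπ₀meas : ∀ y, Measurable fun x => π₀ x y)
    (hπ₁meas : ∀ y, Measurable fun x => π₁ x y)
    (hystarmeas : Measurable y0star)
    (hπ₀pos : ∀ x y, 0 < π₀ x y) (hπ₀sum : ∀ x, ∑ y, π₀ x y = 1)
    (hπ₁nonneg : ∀ x y, 0 ≤ π₁ x y) (hπ₁sum : ∀ x, ∑ y, π₁ x y = 1)
    (hmax : ∀ x y, y ≠ y0star x → π₀ x y < π₀ x (y0star x))
    (hγ : 0 < γ)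
    (hmargin : ∀ x y, y ≠ y0star x → γ ≤ Real.log (π₀ x (y0star x) / π₀ x y))
    (hInt₁ : Integrable (fun x => ∑ y, π₁ x y * Real.log (π₀ x y)) μ)
    (hIntstar : Integrable
      (fun x => ∑ y, (if y = y0star x then (1 : ℝ) else 0) * Real.log (π₀ x y)) μ)
    (δ : ℝ) (hδ : δ ∈ Set.Ioo (0 : ℝ) 1) :
    (μ {x | π₁ x (y0star x) ≤ 1 - δ}).toReal ≤
      (J0 μ π₀ (fun x y => if y = y0star x then (1 : ℝ) else 0) - J0 μ π₀ π₁) / (γ * δ) := by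
  obtain ⟨hδ0, hδ1⟩ := hδ
  set f1 : X → ℝ := fun x => ∑ y, π₁ x y * Real.log (π₀ x y) with hf1
  set fs : X → ℝ := fun x => ∑ y, (if y = y0star x then (1:ℝ) else 0) * Real.log (π₀ x y)
    with hfs
  set g : X → ℝ := fun x => fs x - f1 x with hg
  have hfs_eq : ∀ x, fs x = Real.log (π₀ x (y0star x)) := by
    intro x; simp [hfs]
  have hd : ∀ x y, y ≠ y0star x →
      γ ≤ Real.log (π₀ x (y0star x)) - Real.log (π₀ x y) := by
    intro x y hy
    have := hmargin x y hy
    rwa [Real.log_div (hπ₀pos x (y0star x)).ne' (hπ₀pos x y).ne'] at this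
  have hdnonneg : ∀ x y, 0 ≤ Real.log (π₀ x (y0star x)) - Real.log (π₀ x y) := by
    intro x y
    rcases eq_or_ne y (y0star x) with h | h
    · simp [h]
    · have := Real.log_le_log (hπ₀pos x y) (hmax x y h).le
      linarith
  have hg_eq : ∀ x, g x = ∑ y, π₁ x y *
      (Real.log (π₀ x (y0star x)) - Real.log (π₀ x y)) := by
    intro x
    have : ∑ y, π₁ x y * (Real.log (π₀ x (y0star x)) - Real.log (π₀ x y))
        = (∑ y, π₁ x y) * Real.log (π₀ x (y0star x)) - f1 x := by
      rw [Finset.sum_mul]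
      rw [← Finset.sum_sub_distrib]
      exact Finset.sum_congr rfl (fun y _ => by ring)
    show fs x - f1 x = _
    rw [this, hπ₁sum, one_mul, hfs_eq]
  have hg_nonneg : ∀ x, 0 ≤ g x := by
    intro x
    rw [hg_eq]
    exact Finset.sum_nonneg fun y _ =>
      mul_nonneg (hπ₁nonneg x y) (hdnonneg x y)
  have hg_lower : ∀ x, γ * (1 - π₁ x (y0star x)) ≤ g x := by
    intro x
    rw [hg_eq]
    have h1 : ∑ y, π₁ x y * (Real.log (π₀ x (y0star x)) - Real.log (π₀ x y))
        = ∑ y ∈ Finset.univ.erase (y0star x),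
            π₁ x y * (Real.log (π₀ x (y0star x)) - Real.log (π₀ x y)) := by
      rw [← Finset.sum_erase_add _ _ (Finset.mem_univ (y0star x))]
      simp
    rw [h1]
    have h2 : γ * (1 - π₁ x (y0star x))
        = ∑ y ∈ Finset.univ.erase (y0star x), π₁ x y * γ := by
      rw [← Finset.sum_mul]
      have : ∑ y ∈ Finset.univ.erase (y0star x), π₁ x y
          = 1 - π₁ x (y0star x) := by
        have := Finset.sum_erase_add Finset.univ (π₁ x) (Finset.mem_univ (y0star x))
        rw [hπ₁sum] at this
        linarith
      rw [this]; ring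
    rw [h2]
    refine Finset.sum_le_sum fun y hy => ?_
    have hy' : y ≠ y0star x := Finset.ne_of_mem_erase hy
    exact mul_le_mul_of_nonneg_left (hd x y hy') (hπ₁nonneg x y)
  have hgint : Integrable g μ := hIntstar.sub hInt₁
  have hsubset : {x | π₁ x (y0star x) ≤ 1 - δ} ⊆ {x | γ * δ ≤ g x} := by
    intro x hx
    have : γ * δ ≤ γ * (1 - π₁ x (y0star x)) := by
      apply mul_le_mul_of_nonneg_left _ hγ.le
      simp only [Set.mem_setOf_eq] at hx
      linarith
    exact this.trans (hg_lower x)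
  have hmarkov := mul_meas_ge_le_integral_of_nonneg
    (Filter.Eventually.of_forall hg_nonneg) hgint (γ * δ)
  have hmono : (μ {x | π₁ x (y0star x) ≤ 1 - δ}).toReal
      ≤ (μ {x | γ * δ ≤ g x}).toReal := by
    apply ENNReal.toReal_mono (measure_ne_top μ _)
    exact measure_mono hsubset
  have hInt_eq : ∫ x, g x ∂μ =
      J0 μ π₀ (fun x y => if y = y0star x then (1:ℝ) else 0) - J0 μ π₀ π₁ := by
    rw [hg]
    simp only [J0]
    exact integral_sub hIntstar hInt₁
  have hpos : 0 < γ * δ := mul_pos hγ hδ0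
  rw [← hInt_eq]
  calc (μ {x | π₁ x (y0star x) ≤ 1 - δ}).toReal
      ≤ (μ {x | γ * δ ≤ g x}).toReal := hmono
    _ ≤ (∫ x, g x ∂μ) / (γ * δ) := by
        rw [le_div_iff₀ hpos]
        calc (μ {x | γ * δ ≤ g x}).toReal * (γ * δ)
            = γ * δ * (μ {x | γ * δ ≤ g x}).toReal := by ring
          _ ≤ ∫ x, g x ∂μ := hmarkov
end

section
/- For every probability mass function p on Y, one has Σ_y p(y) log q(y) − β·KL(p‖q) ≤ Σ_y p_β*(y) log q(y) − β·KL(p_β*‖q), with equality if and only if p = p_β*. In particular, p_β* is the unique maximizer over probability mass functions p on Y of the entropy-regularized objective p ↦ E_{y∼p}[log q(y)] − β·KL(p‖q). -/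
open Real

/-- Pointwise bound: `p - r ≤ p * log (p / r)` for `p ≥ 0`, `r > 0`. -/
lemma pt_le {p r : ℝ} (hp : 0 ≤ p) (hr : 0 < r) :
    p - r ≤ p * Real.log (p / r) := by
  rcases eq_or_lt_of_le hp with h | h
  · simp [← h]; linarith
  · have hd : 0 < r / p := div_pos hr h
    have := Real.log_le_sub_one_of_pos hd
    have hlog : Real.log (p / r) = - Real.log (r / p) := by
      rw [← Real.log_inv]; congr 1; field_simp
    rw [hlog]
    have : p * Real.log (r / p) ≤ p * (r / p - 1) := by
      exact mul_le_mul_of_nonneg_left this hp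
    have hx : p * (r / p - 1) = r - p := by field_simp
    nlinarith

lemma pt_lt {p r : ℝ} (hp : 0 ≤ p) (hr : 0 < r) (hne : p ≠ r) :
    p - r < p * Real.log (p / r) := by
  rcases eq_or_lt_of_le hp with h | h
  · simp [← h]; linarith
  · have hd : 0 < r / p := div_pos hr h
    have hd1 : r / p ≠ 1 := by
      intro hc; apply hne; field_simp at hc; linarith
    have := Real.log_lt_sub_one_of_pos hd hd1
    have hlog : Real.log (p / r) = - Real.log (r / p) := by
      rw [← Real.log_inv]; congr 1; field_simp
    rw [hlog]
    have h2 : p * Real.log (r / p) < p * (r / p - 1) := by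
      exact mul_lt_mul_of_pos_left this h
    have hx : p * (r / p - 1) = r - p := by field_simp
    nlinarith

/-- Gibbs inequality with equality case. -/
lemma gibbs {Y : Type*} [Fintype Y] (p r : Y → ℝ) (hp : ∀ y, 0 ≤ p y)
    (hr : ∀ y, 0 < r y) (hpsum : ∑ y, p y = 1) (hrsum : ∑ y, r y = 1) :
    0 ≤ ∑ y, p y * Real.log (p y / r y) ∧
      ((∑ y, p y * Real.log (p y / r y)) = 0 ↔ p = r) := by
  have hle : ∀ y ∈ Finset.univ, p y - r y ≤ p y * Real.log (p y / r y) :=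
    fun y _ => pt_le (hp y) (hr y)
  have hsum : ∑ y, (p y - r y) ≤ ∑ y, p y * Real.log (p y / r y) :=
    Finset.sum_le_sum hle
  have hz : ∑ y, (p y - r y) = 0 := by
    rw [Finset.sum_sub_distrib, hpsum, hrsum]; ring
  constructor
  · linarith
  · constructor
    · intro heq
      by_contra hne
      obtain ⟨y0, hy0⟩ : ∃ y, p y ≠ r y := Function.ne_iff.mp hne
      have : ∑ y, (p y - r y) < ∑ y, p y * Real.log (p y / r y) :=
        Finset.sum_lt_sum hle ⟨y0, Finset.mem_univ y0, pt_lt (hp y0) (hr y0) hy0⟩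
      linarith
    · rintro rfl
      apply Finset.sum_eq_zero
      intro y _
      rw [div_self (hr y).ne', Real.log_one, mul_zero]



/-- The sharpened (entropy-regularized optimal) distribution
`p_β*(y) = q(y)^{1+1/β} / Σ_{y'} q(y')^{1+1/β}`. -/
noncomputable def sharpened {Y : Type*} [Fintype Y] (q : Y → ℝ) (β : ℝ) (y : Y) : ℝ :=
  q y ^ (1 + 1 / β) / ∑ y' : Y, q y' ^ (1 + 1 / β)

/-- The sharpened distribution `p_β*` is the unique maximizer of the entropy-regularized
objective `p ↦ Σ_y p(y) log q(y) − β · KL(p‖q)` over probability mass functions `p` on `Y`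
(with the convention `0 · log 0 = 0`, which holds automatically since `Real.log 0 = 0`). -/
theorem sharpened_is_unique_maximizer {Y : Type*} [Fintype Y] [Nonempty Y]
    (q : Y → ℝ) (β : ℝ) (hqpos : ∀ y, 0 < q y) (hqsum : ∑ y, q y = 1) (hβ : 0 < β)
    (p : Y → ℝ) (hp : ∀ y, 0 ≤ p y) (hpsum : ∑ y, p y = 1) :
    ((∑ y, p y * Real.log (q y)) - β * ∑ y, p y * Real.log (p y / q y)
        ≤ (∑ y, sharpened q β y * Real.log (q y))
          - β * ∑ y, sharpened q β y * Real.log (sharpened q β y / q y))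
    ∧ ((∑ y, p y * Real.log (q y)) - β * ∑ y, p y * Real.log (p y / q y)
        = (∑ y, sharpened q β y * Real.log (q y))
          - β * ∑ y, sharpened q β y * Real.log (sharpened q β y / q y)
        ↔ p = sharpened q β) := by
  set Z : ℝ := ∑ y' : Y, q y' ^ (1 + 1 / β) with hZ
  have hZpos : 0 < Z := Finset.sum_pos (fun y _ => Real.rpow_pos_of_pos (hqpos y) _)
    Finset.univ_nonempty
  set r : Y → ℝ := sharpened q β with hr
  have hrpos : ∀ y, 0 < r y := fun y =>
    div_pos (Real.rpow_pos_of_pos (hqpos y) _) hZpos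
  have hrsum : ∑ y, r y = 1 := by
    simp only [hr, sharpened, ← hZ]
    rw [← Finset.sum_div, ← hZ, div_self hZpos.ne']
  have hlogr : ∀ y, Real.log (r y) = (1 + 1 / β) * Real.log (q y) - Real.log Z := by
    intro y
    rw [hr]
    unfold sharpened
    rw [Real.log_div (Real.rpow_pos_of_pos (hqpos y) _).ne' hZpos.ne',
      Real.log_rpow (hqpos y)]
  -- key identity, for any nonneg g
  have key : ∀ g : Y → ℝ, (∀ y, 0 ≤ g y) →
      (∑ y, g y * Real.log (q y)) - β * ∑ y, g y * Real.log (g y / q y)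
        = β * Real.log Z * (∑ y, g y) - β * ∑ y, g y * Real.log (g y / r y) := by
    intro g hg
    have hterm : ∀ y,
        g y * Real.log (q y) - β * (g y * Real.log (g y / q y))
          = β * Real.log Z * g y - β * (g y * Real.log (g y / r y)) := by
      intro y
      rcases eq_or_lt_of_le (hg y) with h | h
      · simp [← h]
      · rw [Real.log_div h.ne' (hqpos y).ne', Real.log_div h.ne' (hrpos y).ne',
          hlogr y]
        field_simp
        ring
    calc (∑ y, g y * Real.log (q y)) - β * ∑ y, g y * Real.log (g y / q y)
        = ∑ y, (g y * Real.log (q y) - β * (g y * Real.log (g y / q y))) := by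
          rw [Finset.sum_sub_distrib, Finset.mul_sum]
      _ = ∑ y, (β * Real.log Z * g y - β * (g y * Real.log (g y / r y))) := by
          exact Finset.sum_congr rfl (fun y _ => hterm y)
      _ = β * Real.log Z * (∑ y, g y) - β * ∑ y, g y * Real.log (g y / r y) := by
          rw [Finset.sum_sub_distrib, Finset.mul_sum, Finset.mul_sum]
  obtain ⟨hG0, hGiff⟩ := gibbs p r hp hrpos hpsum hrsum
  have hGr : ∑ y, r y * Real.log (r y / r y) = 0 := by
    apply Finset.sum_eq_zero; intro y _
    rw [div_self (hrpos y).ne', Real.log_one, mul_zero]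
  have kp := key p hp
  have kr := key r (fun y => (hrpos y).le)
  rw [hpsum] at kp
  rw [hrsum, hGr] at kr
  constructor
  · rw [kp, kr]
    nlinarith
  · rw [kp, kr]
    constructor
    · intro h
      apply hGiff.mp
      nlinarith
    · intro h
      have : ∑ y, p y * Real.log (p y / r y) = 0 := hGiff.mpr h
      rw [this]
end

section
/- Let M₀ > 0 and K > 0, define U := ((K + √(K² + 4M₀))/2)² and q := K/(K + √(K² + 4M₀)). Let (a_t)_{t≥0} be a sequence of nonnegative real numbers with a₀ ≥ U and a_t ≤ M₀ + K·√(a_{t−1}) for all t ≥ 1. Then for every T ≥ 0, a_T ≤ U + q^T·(a₀ − U). -/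
/-- The fixed point `U = ((K + √(K² + 4M₀))/2)²` of the map `u ↦ M₀ + K√u`. -/
noncomputable def fixedPointU (M₀ K : ℝ) : ℝ :=
  ((K + Real.sqrt (K ^ 2 + 4 * M₀)) / 2) ^ 2

/-- The contraction factor `q = K/(K + √(K² + 4M₀))`. -/
noncomputable def contractionQ (M₀ K : ℝ) : ℝ :=
  K / (K + Real.sqrt (K ^ 2 + 4 * M₀))

/-- Geometric convergence of the recursion: if `a₀ ≥ U`, `a_t ≥ 0`, and
`a_t ≤ M₀ + K√(a_{t−1})` for all `t ≥ 1`, then `a_T ≤ U + q^T (a₀ − U)` for all `T`. -/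
theorem recursion_geometric_convergence (M₀ K : ℝ) (hM : 0 < M₀) (hK : 0 < K)
    (a : ℕ → ℝ) (hnn : ∀ t, 0 ≤ a t) (ha0 : fixedPointU M₀ K ≤ a 0)
    (hrec : ∀ t : ℕ, a (t + 1) ≤ M₀ + K * Real.sqrt (a t)) :
    ∀ T : ℕ, a T ≤ fixedPointU M₀ K + contractionQ M₀ K ^ T * (a 0 - fixedPointU M₀ K) := by
  intro T
  have hs0 : 0 < Real.sqrt (K ^ 2 + 4 * M₀) := Real.sqrt_pos.mpr (by positivity)
  have hs2 : Real.sqrt (K ^ 2 + 4 * M₀) ^ 2 = K ^ 2 + 4 * M₀ :=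
    Real.sq_sqrt (by positivity)
  set s := Real.sqrt (K ^ 2 + 4 * M₀) with hs
  have hU : fixedPointU M₀ K = M₀ + K * ((K + s) / 2) := by
    simp only [fixedPointU, ← hs]; nlinarith [hs2]
  have hsqrtU : Real.sqrt (fixedPointU M₀ K) = (K + s) / 2 := by
    rw [fixedPointU, ← hs, Real.sqrt_sq (by positivity)]
  have hq : contractionQ M₀ K = K / (K + s) := rfl
  have hq0 : 0 < contractionQ M₀ K := by rw [hq]; positivity
  induction T with
  | zero => simpa using ha0
  | succ t ih =>
    have h1 := hrec t
    have hKs : 0 < K + s := by positivity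
    have hge : 0 ≤ contractionQ M₀ K ^ t * (a 0 - fixedPointU M₀ K) := by
      have : 0 ≤ a 0 - fixedPointU M₀ K := by linarith
      positivity
    by_cases hcase : a t ≤ fixedPointU M₀ K
    · have h2 : Real.sqrt (a t) ≤ (K + s) / 2 := by
        rw [← hsqrtU]; exact Real.sqrt_le_sqrt hcase
      have h3 : a (t + 1) ≤ fixedPointU M₀ K := by
        rw [hU]; nlinarith
      have h4 : 0 ≤ contractionQ M₀ K ^ (t + 1) * (a 0 - fixedPointU M₀ K) := by
        have : 0 ≤ a 0 - fixedPointU M₀ K := by linarith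
        positivity
      linarith
    · push_neg at hcase
      set x := Real.sqrt (a t) with hx
      have hx2 : x ^ 2 = a t := Real.sq_sqrt (hnn t)
      have hxge : (K + s) / 2 ≤ x := by
        rw [← hsqrtU, hx]; exact Real.sqrt_le_sqrt hcase.le
      -- K * (x - (K+s)/2) ≤ q * (a t - U)
      have key : K * x - K * ((K + s) / 2) ≤ contractionQ M₀ K * (a t - fixedPointU M₀ K) := by
        rw [hq, div_mul_eq_mul_div, le_div_iff₀ hKs]
        have hUval : fixedPointU M₀ K = ((K + s) / 2) ^ 2 := by
          rw [fixedPointU, ← hs]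
        rw [hUval]
        nlinarith [hxge, hx2, mul_nonneg hK.le (mul_self_nonneg (x - (K + s) / 2))]
      have step : a (t + 1) ≤ fixedPointU M₀ K +
          contractionQ M₀ K * (a t - fixedPointU M₀ K) := by
        have := h1
        rw [hU] at *
        nlinarith [key]
      have ih2 : contractionQ M₀ K * (a t - fixedPointU M₀ K) ≤
          contractionQ M₀ K * (contractionQ M₀ K ^ t * (a 0 - fixedPointU M₀ K)) := by
        apply mul_le_mul_of_nonneg_left _ hq0.le
        linarith
      calc a (t + 1) ≤ fixedPointU M₀ K + contractionQ M₀ K * (a t - fixedPointU M₀ K) := step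
        _ ≤ fixedPointU M₀ K + contractionQ M₀ K ^ (t + 1) * (a 0 - fixedPointU M₀ K) := by
            rw [pow_succ, mul_comm (contractionQ M₀ K ^ t)]
            rw [mul_assoc]
            linarith [ih2]
end

section
/- Suppose max_{y∈Y} |log(π(y)/π'(y))| ≤ ε, and let y, y' ∈ Y be such that |Δ^π(y,y')| ≤ B_c, |Δ^{π'}(y,y')| ≤ B_c, and |Δ^{π♯}(y,y')| ≤ B_c. Then |(Δ^π(y,y') − Δ^{π♯}(y,y'))² − (Δ^{π'}(y,y') − Δ^{π♯}(y,y'))²| ≤ 8·β·B_c·ε. -/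
/-- The pairwise reward difference
`Δ^p(y,y') = β [log(p(y)/π_ref(y)) − log(p(y')/π_ref(y'))]`. -/
noncomputable def pairDiff {Y : Type*} (πref : Y → ℝ) (β : ℝ) (p : Y → ℝ) (y y' : Y) : ℝ :=
  β * (Real.log (p y / πref y) - Real.log (p y' / πref y'))

/-- Lipschitz-like property of the clipped squared loss: if `π` and `π'` are `ε`-close in
the sup log-ratio metric and all pairwise differences are clipped at `B_c`, then the
squared losses differ by at most `8βB_cε`. -/
theorem clipped_squared_loss_lipschitz {Y : Type*} [Fintype Y] [Nonempty Y]
    (πref π π' πs : Y → ℝ)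
    (hπref : ∀ y, 0 < πref y) (hπ : ∀ y, 0 < π y) (hπ' : ∀ y, 0 < π' y)
    (hπs : ∀ y, 0 < πs y)
    (hπrefsum : ∑ y, πref y = 1) (hπsum : ∑ y, π y = 1) (hπ'sum : ∑ y, π' y = 1)
    (hπssum : ∑ y, πs y = 1)
    (β Bc ε : ℝ) (hβ : 0 < β) (hBc : 0 < Bc) (hε : 0 < ε)
    (hclose : ∀ y, |Real.log (π y / π' y)| ≤ ε)
    (y y' : Y)
    (h1 : |pairDiff πref β π y y'| ≤ Bc)
    (h2 : |pairDiff πref β π' y y'| ≤ Bc)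
    (h3 : |pairDiff πref β πs y y'| ≤ Bc) :
    |(pairDiff πref β π y y' - pairDiff πref β πs y y') ^ 2 -
        (pairDiff πref β π' y y' - pairDiff πref β πs y y') ^ 2| ≤ 8 * β * Bc * ε := by
  set a := pairDiff πref β π y y' with ha
  set b := pairDiff πref β π' y y' with hb
  set c := pairDiff πref β πs y y' with hc
  have hdiff : a - b = β * (Real.log (π y / π' y) - Real.log (π y' / π' y')) := by
    rw [ha, hb]
    simp only [pairDiff]
    rw [Real.log_div (hπ y).ne' (hπref y).ne', Real.log_div (hπ y').ne' (hπref y').ne',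
      Real.log_div (hπ' y).ne' (hπref y).ne', Real.log_div (hπ' y').ne' (hπref y').ne',
      Real.log_div (hπ y).ne' (hπ' y).ne', Real.log_div (hπ y').ne' (hπ' y').ne']
    ring
  have hab : |a - b| ≤ β * (2 * ε) := by
    rw [hdiff, abs_mul, abs_of_pos hβ]
    have := abs_sub (Real.log (π y / π' y)) (Real.log (π y' / π' y'))
    have h1 := hclose y
    have h2 := hclose y'
    nlinarith [abs_nonneg (Real.log (π y / π' y) - Real.log (π y' / π' y'))]
  have hsum : |a + b - 2 * c| ≤ 4 * Bc := by
    calc |a + b - 2 * c| ≤ |a| + |b| + 2 * |c| := by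
          have := abs_add_le (a + b) (-(2*c))
          have := abs_add_le a b
          simp only [abs_neg, abs_mul] at *
          calc |a + b - 2*c| ≤ |a + b| + |2*c| := by
                have := abs_sub (a+b) (2*c)
                exact abs_sub _ _
            _ ≤ |a| + |b| + 2*|c| := by
                rw [abs_mul]
                have : |(2:ℝ)| = 2 := by norm_num
                rw [this]
                linarith [abs_add_le a b]
      _ ≤ 4 * Bc := by linarith
  have key : (a - c) ^ 2 - (b - c) ^ 2 = (a - b) * (a + b - 2 * c) := by ring
  rw [key, abs_mul]
  calc |a - b| * |a + b - 2 * c| ≤ (β * (2 * ε)) * (4 * Bc) := by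
        apply mul_le_mul hab hsum (abs_nonneg _)
        positivity
    _ = 8 * β * Bc * ε := by ring
end

section
/- Let C > 0, α > 0, and 0 < λ ≤ C, and suppose the nonnegative reals λ₁, …, λ_d satisfy the exponential decay condition λᵢ ≤ C·e^{−α·i} for every i = 1, …, d. Then the ridge effective dimension satisfies d_eff(λ) ≤ (1/α)·log(C/λ) + 1 + 1/(e^α − 1). -/
/-- The ridge effective dimension `d_eff(λ) = Σᵢ λᵢ/(λᵢ + λ)`. -/
noncomputable def dEff {d : ℕ} (lam : Fin d → ℝ) (l : ℝ) : ℝ :=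
  ∑ i, lam i / (lam i + l)

/-- Effective dimension under exponential spectral decay: if `λᵢ ≤ C e^{−αi}` for
`i = 1, …, d` and `0 < λ ≤ C`, then
`d_eff(λ) ≤ (1/α) log(C/λ) + 1 + 1/(e^α − 1)`. -/
theorem dEff_exponential_decay (d : ℕ) (C α l : ℝ)
    (hC : 0 < C) (hα : 0 < α) (hl : 0 < l) (hlC : l ≤ C)
    (lam : Fin d → ℝ) (hnn : ∀ i, 0 ≤ lam i)
    (hdecay : ∀ i : Fin d, lam i ≤ C * Real.exp (-α * ((i : ℕ) + 1))) :
    dEff lam l ≤ (1 / α) * Real.log (C / l) + 1 + 1 / (Real.exp α - 1) := by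
  have hCl : 1 ≤ C / l := (one_le_div hl).mpr hlC
  set T : ℝ := (1 / α) * Real.log (C / l) with hTdef
  have hT0 : 0 ≤ T := mul_nonneg (by positivity) (Real.log_nonneg hCl)
  set N : ℕ := ⌊T⌋₊ with hNdef
  have hNT : (N : ℝ) ≤ T := Nat.floor_le hT0
  have hTN : T < N + 1 := Nat.lt_floor_add_one T
  have hexpT : Real.exp (α * T) = C / l := by
    rw [hTdef]
    rw [show α * (1 / α * Real.log (C / l)) = Real.log (C / l) by field_simp]
    exact Real.exp_log (by positivity)
  set r : ℝ := Real.exp (-α) with hrdef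
  have hr0 : 0 < r := Real.exp_pos _
  have hr1 : r < 1 := by
    rw [hrdef]; exact Real.exp_lt_one_iff.mpr (by linarith)
  set G : ℕ → ℝ := fun i => if i < N then (1 : ℝ) else Real.exp (α * (T - (i + 1))) with hGdef
  -- termwise bounds
  have hterm : ∀ i : Fin d, lam i / (lam i + l) ≤ G (i : ℕ) := by
    intro i
    rw [hGdef]
    by_cases h : (i : ℕ) < N
    · simp only [h, if_true]
      rw [div_le_one (by linarith [hnn i])]
      linarith
    · simp only [h, if_false]
      have h1 : lam i / (lam i + l) ≤ lam i / l := by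
        apply div_le_div_of_nonneg_left (hnn i) hl
        linarith [hnn i]
      have h2 : lam i / l ≤ (C / l) * Real.exp (-α * ((i : ℕ) + 1)) := by
        rw [div_mul_eq_mul_div]
        exact div_le_div_of_nonneg_right (hdecay i) hl.le
      have h3 : (C / l) * Real.exp (-α * ((i : ℕ) + 1)) = Real.exp (α * (T - ((i : ℕ) + 1))) := by
        rw [← hexpT, ← Real.exp_add]; ring_nf
      linarith
  have hsum : dEff lam l ≤ ∑ i ∈ Finset.range d, G i := by
    rw [dEff, ← Fin.sum_univ_eq_sum_range G d]
    exact Finset.sum_le_sum fun i _ => hterm i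
  -- split the sum
  rw [← Finset.sum_filter_add_sum_filter_not (Finset.range d) (· < N) G] at hsum
  have hs1 : ∑ i ∈ (Finset.range d).filter (· < N), G i ≤ (N : ℝ) := by
    have heq : ∀ i ∈ (Finset.range d).filter (· < N), G i = 1 := by
      intro i hi
      simp only [Finset.mem_filter] at hi
      simp [hGdef, hi.2]
    rw [Finset.sum_congr rfl heq, Finset.sum_const, nsmul_eq_mul, mul_one]
    have hsub : (Finset.range d).filter (· < N) ⊆ Finset.range N := by
      intro i hi
      simp only [Finset.mem_filter] at hi
      exact Finset.mem_range.mpr hi.2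
    exact Nat.cast_le.mpr (by simpa only [Finset.card_range] using Finset.card_le_card hsub)
  have hs2 : ∑ i ∈ (Finset.range d).filter (fun i => ¬ i < N), G i ≤ 1 / (1 - r) := by
    have hset : (Finset.range d).filter (fun i => ¬ i < N) = Finset.Ico N d := by
      ext i
      simp [Finset.mem_Ico, Nat.not_lt, and_comm]
    rw [hset]
    have hb : ∀ i ∈ Finset.Ico N d, G i ≤ r ^ (i - N) := by
      intro i hi
      rw [Finset.mem_Ico] at hi
      have hNi : N ≤ i := hi.1
      have : G i = Real.exp (α * (T - (i + 1))) := by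
        simp [hGdef, Nat.not_lt.mpr hNi]
      rw [this]
      have hpow : r ^ (i - N) = Real.exp (-(α * (i - N : ℕ))) := by
        rw [hrdef, ← Real.exp_nat_mul]; ring_nf
      rw [hpow, Real.exp_le_exp]
      have hc : ((i - N : ℕ) : ℝ) = (i : ℝ) - (N : ℝ) := by
        rw [Nat.cast_sub hNi]
      rw [hc]
      have hiN : (N : ℝ) ≤ (i : ℝ) := Nat.cast_le.mpr hNi
      nlinarith
    calc ∑ i ∈ Finset.Ico N d, G i ≤ ∑ i ∈ Finset.Ico N d, r ^ (i - N) :=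
          Finset.sum_le_sum hb
      _ = ∑ j ∈ Finset.range (d - N), r ^ j := by
          rw [Finset.sum_Ico_eq_sum_range]
          exact Finset.sum_congr rfl fun j _ => by rw [Nat.add_sub_cancel_left]
      _ ≤ 1 / (1 - r) := by
          rw [geom_sum_eq hr1.ne]
          have h1r : (0:ℝ) < 1 - r := by linarith
          rw [show (r ^ (d - N) - 1) / (r - 1) = (1 - r ^ (d - N)) / (1 - r) by
            rw [← neg_div_neg_eq]; ring_nf]
          apply div_le_div_of_nonneg_right _ h1r.le
          have : 0 ≤ r ^ (d - N) := pow_nonneg hr0.le _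
          linarith
  have hfinal : 1 / (1 - r) = 1 + 1 / (Real.exp α - 1) := by
    have he1 : 1 < Real.exp α := by
      rw [show (1:ℝ) = Real.exp 0 by simp]
      exact Real.exp_lt_exp.mpr hα
    have hmul : Real.exp α * r = 1 := by rw [hrdef, ← Real.exp_add]; simp
    have h1r : (1:ℝ) - r ≠ 0 := ne_of_gt (by linarith)
    have he : Real.exp α - 1 ≠ 0 := ne_of_gt (by linarith)
    field_simp
    nlinarith [hmul]
  calc dEff lam l ≤ _ := hsum
    _ ≤ (N : ℝ) + 1 / (1 - r) := add_le_add hs1 hs2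
    _ ≤ T + (1 + 1 / (Real.exp α - 1)) := by rw [← hfinal]; linarith
    _ = T + 1 + 1 / (Real.exp α - 1) := by ring
end

section
/- Let C > 0, p > 1, and λ > 0, and suppose the nonnegative reals λ₁, …, λ_d satisfy the polynomial decay condition λᵢ ≤ C·i^{−p} for every i = 1, …, d. Then the ridge effective dimension satisfies d_eff(λ) ≤ (p/(p−1))·( (C/λ)^{1/p} + 1 ). -/
/-- Bernoulli-type key inequality: for `x ≥ 1` and `p > 1`,
`(p-1) (x+1)^{-p} ≤ x^{1-p} - (x+1)^{1-p}`. -/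
lemma dEff_key {p x : ℝ} (hp : 1 < p) (hx : 1 ≤ x) :
    (p - 1) * (x + 1) ^ (-p) ≤ x ^ (1 - p) - (x + 1) ^ (1 - p) := by
  have hx0 : (0:ℝ) < x := lt_of_lt_of_le one_pos hx
  have hx1 : (0:ℝ) < x + 1 := by linarith
  have hb : 1 + p * (1 / x) ≤ (1 + 1 / x) ^ p := by
    have h0 : (0:ℝ) ≤ 1 / x := by positivity
    exact one_add_mul_self_le_rpow_one_add (by linarith) hp.le
  have h1 : (1 : ℝ) + 1 / x = (x + 1) / x := by field_simp
  rw [h1, Real.div_rpow hx1.le hx0.le] at hb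
  -- multiply through by x * (x+1)^(-p) > 0
  have hxp : (0:ℝ) < x ^ p := Real.rpow_pos_of_pos hx0 p
  have hx1p : (0:ℝ) < (x + 1) ^ (-p) := Real.rpow_pos_of_pos hx1 (-p)
  have hmul : (1 + p * (1 / x)) * (x * (x + 1) ^ (-p)) ≤
      ((x + 1) ^ p / x ^ p) * (x * (x + 1) ^ (-p)) := by
    apply mul_le_mul_of_nonneg_right hb
    positivity
  have e1 : ((x + 1) ^ p / x ^ p) * (x * (x + 1) ^ (-p)) = x ^ (1 - p) := by
    have hprod : (x + 1) ^ (-p) * (x + 1) ^ p = 1 := by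
      rw [← Real.rpow_add hx1]; simp
    have hx' : x ^ (1 - p) * x ^ p = x := by
      rw [← Real.rpow_add hx0]; norm_num
    field_simp
    linear_combination x * hprod - hx'
  have e2 : (1 + p * (1 / x)) * (x * (x + 1) ^ (-p)) =
      (x + 1) ^ (1 - p) + (p - 1) * (x + 1) ^ (-p) := by
    rw [show (1:ℝ) - p = 1 + (-p) by ring, Real.rpow_add hx1, Real.rpow_one]
    field_simp
    ring
  rw [e1] at hmul
  rw [e2] at hmul
  linarith

/-- Effective dimension under polynomial spectral decay: if `λᵢ ≤ C i^{−p}` for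
`i = 1, …, d` with `p > 1`, then `d_eff(λ) ≤ (p/(p−1)) ((C/λ)^{1/p} + 1)`. -/
theorem dEff_polynomial_decay (d : ℕ) (C p l : ℝ)
    (hC : 0 < C) (hp : 1 < p) (hl : 0 < l)
    (lam : Fin d → ℝ) (hnn : ∀ i, 0 ≤ lam i)
    (hdecay : ∀ i : Fin d, lam i ≤ C * (((i : ℕ) + 1 : ℝ)) ^ (-p)) :
    dEff lam l ≤ (p / (p - 1)) * ((C / l) ^ (1 / p) + 1) := by
  set t : ℝ := (C / l) ^ (1 / p) with ht_def
  have hCl : (0:ℝ) < C / l := div_pos hC hl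
  have ht : 0 < t := Real.rpow_pos_of_pos hCl _
  set m : ℕ := ⌈t⌉₊ with hm_def
  have hm1 : 1 ≤ m := Nat.one_le_iff_ne_zero.mpr (by
    simp only [hm_def, ne_eq, Nat.ceil_eq_zero, not_le]; exact ht)
  have htm : t ≤ (m : ℝ) := Nat.le_ceil t
  have hmt : (m : ℝ) ≤ t + 1 := (Nat.ceil_lt_add_one ht.le).le
  have hp0 : p ≠ 0 := by positivity
  have htp : t ^ p = C / l := by
    rw [ht_def, ← Real.rpow_mul hCl.le, one_div_mul_cancel hp0, Real.rpow_one]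
  -- step 1: per-term bound
  have step1 : dEff lam l ≤ ∑ n ∈ Finset.range d, min 1 ((C / l) * ((n : ℝ) + 1) ^ (-p)) := by
    rw [dEff, ← Fin.sum_univ_eq_sum_range (fun n => min 1 ((C / l) * ((n : ℝ) + 1) ^ (-p)))]
    apply Finset.sum_le_sum
    intro i _
    have hd : 0 < lam i + l := by have := hnn i; linarith
    refine le_min ?_ ?_
    · rw [div_le_one hd]; linarith
    · have h1 : lam i / (lam i + l) ≤ (C * (((i : ℕ) + 1 : ℝ)) ^ (-p)) / l := by
        gcongr
        · exact hdecay i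
        · have := hnn i; linarith
      calc lam i / (lam i + l) ≤ (C * (((i : ℕ) + 1 : ℝ)) ^ (-p)) / l := h1
        _ = (C / l) * ((i : ℕ) + 1 : ℝ) ^ (-p) := by ring
  -- step 2: split the sum
  have hdiff : Finset.range d \ Finset.range m = Finset.Ico m d := by
    ext n; simp [Finset.mem_Ico]; omega
  have step2 : ∑ n ∈ Finset.range d, min 1 ((C / l) * ((n : ℝ) + 1) ^ (-p)) ≤
      (m : ℝ) + (C / l) * ∑ n ∈ Finset.Ico m d, ((n : ℝ) + 1) ^ (-p) := by
    rw [← Finset.sum_inter_add_sum_sdiff (Finset.range d) (Finset.range m)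
      (fun n => min 1 ((C / l) * ((n : ℝ) + 1) ^ (-p))), hdiff]
    have hA : ∑ n ∈ Finset.range d ∩ Finset.range m,
        min 1 ((C / l) * ((n : ℝ) + 1) ^ (-p)) ≤ (m : ℝ) := by
      calc ∑ n ∈ Finset.range d ∩ Finset.range m,
            min 1 ((C / l) * ((n : ℝ) + 1) ^ (-p))
          ≤ ∑ n ∈ Finset.range d ∩ Finset.range m, (1:ℝ) := by
            apply Finset.sum_le_sum; intro n _; exact min_le_left _ _
        _ = ((Finset.range d ∩ Finset.range m).card : ℝ) := by simp
        _ ≤ (m : ℝ) := by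
            have : (Finset.range d ∩ Finset.range m).card ≤ m := by
              calc (Finset.range d ∩ Finset.range m).card
                  ≤ (Finset.range m).card := Finset.card_le_card (Finset.inter_subset_right)
                _ = m := Finset.card_range m
            exact_mod_cast this
    have hB : ∑ n ∈ Finset.Ico m d, min 1 ((C / l) * ((n : ℝ) + 1) ^ (-p)) ≤
        (C / l) * ∑ n ∈ Finset.Ico m d, ((n : ℝ) + 1) ^ (-p) := by
      rw [Finset.mul_sum]
      apply Finset.sum_le_sum; intro n _; exact min_le_right _ _
    linarith
  -- step 3: tail bound
  have step3 : ∑ n ∈ Finset.Ico m d, ((n : ℝ) + 1) ^ (-p) ≤ (m : ℝ) ^ (1 - p) / (p - 1) := by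
    have hp1 : (0:ℝ) < p - 1 := by linarith
    have hm0 : (1:ℝ) ≤ (m : ℝ) := by exact_mod_cast hm1
    rw [Finset.sum_Ico_eq_sum_range]
    set F : ℕ → ℝ := fun j => ((m : ℝ) + j) ^ (1 - p) with hF
    have hFnn : ∀ j, 0 ≤ F j := by
      intro j
      apply Real.rpow_nonneg
      positivity
    calc ∑ j ∈ Finset.range (d - m), (((m + j : ℕ) : ℝ) + 1) ^ (-p)
        ≤ ∑ j ∈ Finset.range (d - m), (F j - F (j + 1)) / (p - 1) := by
          apply Finset.sum_le_sum
          intro j _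
          have hx : (1:ℝ) ≤ (m : ℝ) + j := by
            have : (0:ℝ) ≤ (j:ℝ) := Nat.cast_nonneg j
            linarith
          have hk := dEff_key hp hx
          have e1 : (((m + j : ℕ) : ℝ) + 1) = ((m : ℝ) + j) + 1 := by push_cast; ring
          have e2 : F (j + 1) = (((m : ℝ) + j) + 1) ^ (1 - p) := by
            simp only [hF]; push_cast; ring_nf
          rw [e1, le_div_iff₀ hp1]
          rw [e2]
          simp only [hF]
          linarith [hk]
        _ = (F 0 - F (d - m)) / (p - 1) := by
          rw [← Finset.sum_div, Finset.sum_range_sub' F]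
        _ ≤ F 0 / (p - 1) := by
          apply div_le_div_of_nonneg_right ?_ hp1.le
          linarith [hFnn (d - m)]
        _ = (m : ℝ) ^ (1 - p) / (p - 1) := by simp [hF]
  -- combine
  have hm1p : (m : ℝ) ^ (1 - p) ≤ t ^ (1 - p) := by
    apply Real.rpow_le_rpow_of_nonpos ht htm
    linarith
  have htt : t ^ p * t ^ (1 - p) = t := by
    rw [← Real.rpow_add ht]; norm_num
  have hp1 : (0:ℝ) < p - 1 := by linarith
  have hcl : (C / l) * ((m : ℝ) ^ (1 - p) / (p - 1)) ≤ t / (p - 1) := by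
    rw [← htp]
    calc t ^ p * ((m : ℝ) ^ (1 - p) / (p - 1)) ≤ t ^ p * (t ^ (1 - p) / (p - 1)) := by
          apply mul_le_mul_of_nonneg_left ?_ (Real.rpow_nonneg ht.le p)
          exact div_le_div_of_nonneg_right hm1p hp1.le
      _ = t / (p - 1) := by rw [mul_div_assoc', htt]
  have hfinal : (t + 1) + t / (p - 1) ≤ (p / (p - 1)) * (t + 1) := by
    rw [div_mul_eq_mul_div, le_div_iff₀ hp1, add_mul, div_mul_cancel₀ _ hp1.ne']
    nlinarith
  have htail : (C / l) * (∑ n ∈ Finset.Ico m d, ((n : ℝ) + 1) ^ (-p)) ≤ t / (p - 1) := by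
    refine le_trans ?_ hcl
    apply mul_le_mul_of_nonneg_left step3 hCl.le
  calc dEff lam l ≤ ∑ n ∈ Finset.range d, min 1 ((C / l) * ((n : ℝ) + 1) ^ (-p)) := step1
    _ ≤ (m : ℝ) + (C / l) * ∑ n ∈ Finset.Ico m d, ((n : ℝ) + 1) ^ (-p) := step2
    _ ≤ (t + 1) + t / (p - 1) := by linarith
    _ ≤ (p / (p - 1)) * (t + 1) := hfinal
end

section
/- Let X₁, …, X_n be independent identically distributed real random variables on a probability space with 0 ≤ Xᵢ ≤ M almost surely, where M > 0 and n ≥ 1, and let δ ∈ (0,1). Then P( E[X₁] > (2/n)·Σ_{i=1}^n Xᵢ + 4·M·log(1/δ)/n ) ≤ δ. -/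
open MeasureTheory ProbabilityTheory

lemma exp_neg_le_one_sub_half (x : ℝ) (h0 : 0 ≤ x) (h1 : x ≤ 1) :
    Real.exp (-x) ≤ 1 - x / 2 := by
  have h2 : (0:ℝ) < 1 - x / 2 := by linarith
  rw [Real.exp_neg, inv_le_iff_one_le_mul₀ (Real.exp_pos x)]
  have h3 := Real.add_one_le_exp x
  nlinarith [Real.exp_pos x]

/-- Empirical (fixed-point) form of Bernstein's inequality for i.i.d. `[0,M]`-valued
random variables: with probability at least `1 − δ`,
`E[X₁] ≤ (2/n) Σᵢ Xᵢ + 4 M log(1/δ)/n`. -/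
theorem empirical_bernstein
    {Ω : Type*} [MeasurableSpace Ω] (P : Measure Ω) [IsProbabilityMeasure P]
    (n : ℕ) (hn : 1 ≤ n) (M : ℝ) (hM : 0 < M)
    (X : Fin n → Ω → ℝ) (hmeas : ∀ i, Measurable (X i))
    (hindep : iIndepFun X P)
    (hident : ∀ i, IdentDistrib (X i) (X ⟨0, hn⟩) P P)
    (hbound : ∀ i, ∀ᵐ ω ∂P, X i ω ∈ Set.Icc (0 : ℝ) M)
    (δ : ℝ) (hδ : δ ∈ Set.Ioo (0 : ℝ) 1) :
    (P {ω | (∫ ω', X ⟨0, hn⟩ ω' ∂P) >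
        (2 / n) * ∑ i, X i ω + 4 * M * Real.log (1 / δ) / n}).toReal ≤ δ := by
  obtain ⟨hδ0, hδ1⟩ := hδ
  set μ : ℝ := ∫ ω', X ⟨0, hn⟩ ω' ∂P with hμ
  set t : ℝ := 1 / (2 * M) with ht
  have ht0 : 0 ≤ t := by positivity
  set L : ℝ := Real.log (1 / δ) with hL
  set Z : Fin n → Ω → ℝ := fun i ω => (-2) * X i ω with hZ
  have hZmeas : ∀ i, Measurable (Z i) := fun i => (hmeas i).const_mul _
  have hZindep : iIndepFun Z P :=
    hindep.comp (fun _ => fun x => (-2) * x) (fun _ => measurable_const_mul _)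
  -- integrability of exp (t * Z i)
  have hint : ∀ i, Integrable (fun ω => Real.exp (t * Z i ω)) P := by
    intro i
    refine Integrable.mono' (integrable_const 1)
      (((hZmeas i).const_mul t).exp.aestronglyMeasurable) ?_
    filter_upwards [hbound i] with ω hω
    have : t * Z i ω ≤ 0 := by
      simp only [hZ]
      have := hω.1
      nlinarith
    simpa [Real.norm_eq_abs, abs_of_pos (Real.exp_pos _)] using Real.exp_le_one_iff.2 this
  -- integrability of exp (t * sum)
  have hintsum : Integrable (fun ω => Real.exp (t * ∑ i, Z i ω)) P := by
    refine Integrable.mono' (integrable_const 1)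
      ((Finset.measurable_sum _ (fun i _ => hZmeas i)).const_mul t).exp.aestronglyMeasurable ?_
    have hb : ∀ᵐ ω ∂P, ∀ i, X i ω ∈ Set.Icc (0:ℝ) M := MeasureTheory.ae_all_iff.2 hbound
    filter_upwards [hb] with ω hω
    have hsum : t * ∑ i, Z i ω ≤ 0 := by
      have : ∀ i, Z i ω ≤ 0 := fun i => by have := (hω i).1; simp only [hZ]; nlinarith
      have hs : ∑ i, Z i ω ≤ 0 := Finset.sum_nonpos fun i _ => this i
      nlinarith
    simpa [Real.norm_eq_abs, abs_of_pos (Real.exp_pos _)] using Real.exp_le_one_iff.2 hsum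
  set ε : ℝ := 4 * M * L - n * μ with hε
  -- event inclusion
  have hsub : {ω | μ > (2 / n) * ∑ i, X i ω + 4 * M * L / n} ⊆ {ω | ε ≤ ∑ i, Z i ω} := by
    intro ω hω
    simp only [Set.mem_setOf_eq] at hω ⊢
    have hn0 : (0:ℝ) < n := by exact_mod_cast hn
    have h1 : (2 / n) * ∑ i, X i ω + 4 * M * L / n < μ := hω
    have h2 : 2 * ∑ i, X i ω + 4 * M * L < n * μ := by
      have := mul_lt_mul_of_pos_left h1 hn0
      rw [mul_add] at this
      rw [show (n:ℝ) * ((2 / n) * ∑ i, X i ω) = 2 * ∑ i, X i ω by field_simp,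
        show (n:ℝ) * (4 * M * L / n) = 4 * M * L by field_simp] at this
      linarith
    have h3 : ∑ i, Z i ω = (-2) * ∑ i, X i ω := by
      simp [hZ, Finset.mul_sum]
    rw [h3]; linarith
  have hmono : (P {ω | μ > (2 / n) * ∑ i, X i ω + 4 * M * L / n}).toReal
      ≤ (P {ω | ε ≤ ∑ i, Z i ω}).toReal :=
    ENNReal.toReal_mono (measure_ne_top _ _) (measure_mono hsub)
  -- Chernoff
  have hcher := measure_ge_le_exp_mul_mgf (μ := P) (X := fun ω => ∑ i, Z i ω) ε ht0
    (by simpa using hintsum)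
  have hmgfsum : mgf (fun ω => ∑ i, Z i ω) P t = ∏ i, mgf (Z i) P t := by
    have h := hZindep.mgf_sum (t := t) hZmeas Finset.univ
    have hfun : (fun ω => ∑ i, Z i ω) = ∑ i, Z i := by funext ω; simp
    rw [hfun]; exact h
  -- each mgf equals mgf of Z 0
  have hmgfi : ∀ i, mgf (Z i) P t = ∫ ω, Real.exp (t * Z ⟨0, hn⟩ ω) ∂P := by
    intro i
    have hid : IdentDistrib (fun ω => Real.exp (t * Z i ω))
        (fun ω => Real.exp (t * Z ⟨0, hn⟩ ω)) P P := by
      have := (hident i).comp (u := fun x => Real.exp (t * ((-2) * x)))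
        (Real.measurable_exp.comp ((measurable_id.const_mul (-2:ℝ)).const_mul t))
      simpa [hZ, Function.comp_def] using this
    simpa [mgf] using hid.integral_eq
  -- bound mgf of Z 0
  have hμ0 : 0 ≤ μ := integral_nonneg_of_ae <| by
    filter_upwards [hbound ⟨0, hn⟩] with ω hω using hω.1
  have hintX : Integrable (X ⟨0, hn⟩) P := by
    refine Integrable.mono' (integrable_const M) (hmeas _).aestronglyMeasurable ?_
    filter_upwards [hbound ⟨0, hn⟩] with ω hω
    rw [Real.norm_eq_abs, abs_of_nonneg hω.1]; exact hω.2
  have hmgf0 : ∫ ω, Real.exp (t * Z ⟨0, hn⟩ ω) ∂P ≤ Real.exp (-(μ / (2 * M))) := by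
    have hstep : ∫ ω, Real.exp (t * Z ⟨0, hn⟩ ω) ∂P ≤ 1 - μ / (2 * M) := by
      have hib : Integrable (fun ω => 1 - X ⟨0, hn⟩ ω / (2 * M)) P :=
        (integrable_const 1).sub (hintX.div_const _)
      have hle : ∀ᵐ ω ∂P, Real.exp (t * Z ⟨0, hn⟩ ω) ≤ 1 - X ⟨0, hn⟩ ω / (2 * M) := by
        filter_upwards [hbound ⟨0, hn⟩] with ω hω
        have hx0 : 0 ≤ X ⟨0, hn⟩ ω / M := div_nonneg hω.1 hM.le
        have hx1 : X ⟨0, hn⟩ ω / M ≤ 1 := by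
          rw [div_le_one hM]; exact hω.2
        have heq : t * Z ⟨0, hn⟩ ω = -(X ⟨0, hn⟩ ω / M) := by
          simp only [hZ, ht]; field_simp
        rw [heq]
        have := exp_neg_le_one_sub_half _ hx0 hx1
        calc Real.exp (-(X ⟨0, hn⟩ ω / M)) ≤ 1 - (X ⟨0, hn⟩ ω / M) / 2 := this
          _ = 1 - X ⟨0, hn⟩ ω / (2 * M) := by ring
      calc ∫ ω, Real.exp (t * Z ⟨0, hn⟩ ω) ∂P
          ≤ ∫ ω, (1 - X ⟨0, hn⟩ ω / (2 * M)) ∂P :=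
            integral_mono_ae (by simpa using hint ⟨0, hn⟩) hib hle
        _ = 1 - μ / (2 * M) := by
            rw [integral_sub (integrable_const 1) (hintX.div_const _)]
            simp [integral_div, hμ]
    calc ∫ ω, Real.exp (t * Z ⟨0, hn⟩ ω) ∂P ≤ 1 - μ / (2 * M) := hstep
      _ ≤ Real.exp (-(μ / (2 * M))) := by
          have := Real.add_one_le_exp (-(μ / (2 * M)))
          linarith
  -- combine
  have hmgf_nonneg : ∀ i, 0 ≤ mgf (Z i) P t := fun i => mgf_nonneg
  have hprod : ∏ i, mgf (Z i) P t ≤ Real.exp (-(μ / (2 * M))) ^ n := by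
    rw [Finset.prod_congr rfl (fun i _ => hmgfi i), Finset.prod_const, Finset.card_univ,
      Fintype.card_fin]
    exact pow_le_pow_left₀ (by
      rw [← hmgfi ⟨0, hn⟩]; exact hmgf_nonneg _) hmgf0 n
  have hfinal : Real.exp (-t * ε) * (mgf (fun ω => ∑ i, Z i ω) P t) ≤ δ := by
    rw [hmgfsum]
    have h1 : Real.exp (-t * ε) * ∏ i, mgf (Z i) P t
        ≤ Real.exp (-t * ε) * Real.exp (-(μ / (2 * M))) ^ n :=
      mul_le_mul_of_nonneg_left hprod (Real.exp_pos _).le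
    have h2 : Real.exp (-t * ε) * Real.exp (-(μ / (2 * M))) ^ n = Real.exp (-2 * L) := by
      rw [← Real.exp_nat_mul, ← Real.exp_add]
      congr 1
      simp only [ht, hε]
      field_simp
      ring
    have h3 : Real.exp (-2 * L) = δ ^ 2 := by
      rw [hL, Real.log_div one_ne_zero (ne_of_gt hδ0), Real.log_one]
      rw [show (-2 : ℝ) * (0 - Real.log δ) = 2 * Real.log δ by ring]
      rw [show (2:ℝ) * Real.log δ = Real.log δ + Real.log δ by ring, Real.exp_add,
        Real.exp_log hδ0]
      ring
    have h4 : δ ^ 2 ≤ δ := by nlinarith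
    calc Real.exp (-t * ε) * ∏ i, mgf (Z i) P t ≤ Real.exp (-2 * L) := by rw [← h2]; exact h1
      _ = δ ^ 2 := h3
      _ ≤ δ := h4
  calc (P {ω | μ > (2 / n) * ∑ i, X i ω + 4 * M * L / n}).toReal
      ≤ (P {ω | ε ≤ ∑ i, Z i ω}).toReal := hmono
    _ ≤ Real.exp (-t * ε) * mgf (fun ω => ∑ i, Z i ω) P t := hcher
    _ ≤ δ := hfinal
end
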